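/- For every odd integer n ≥ 3, there exists a 2-fold graph covering from the Hecke graph G4(n) onto the Farey graph G3(n). Likewise, for every integer n ≥ 2 not divisible by 3, there exists a 2-fold graph covering from the Hecke graph G6(n) onto G3(n). -/

import Mathlib

/-- The equivalence relation identifying `(a,c)` with `(-a,-c)` on the set of pairs of
elements of `ℤ/nℤ` generating the unit ideal. -/
def FareySetoid (n : ℕ) : Setoid {p : ZMod n × ZMod n // IsCoprime p.1 p.2} where
  r p q := p.1 = q.1 ∨ p.1 = -q.1
  iseqv := by
    constructor
    · intro p; exact Or.inl rfl
    · rintro p q (h | h)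
      · exact Or.inl h.symm
      · right; rw [h, neg_neg]
    · rintro p q s (h1 | h1) (h2 | h2)
      · exact Or.inl (h1.trans h2)
      · right; rw [h1, h2]
      · right; rw [h1, h2]
      · left; rw [h1, h2, neg_neg]

/-- The vertices of the Farey graph `G3(n)`: classes `[a:c]` of pairs `(a,c) ∈ (ℤ/nℤ)²`
generating the unit ideal, with `(a,c) ~ (-a,-c)`. -/
def FareyVertex (n : ℕ) := Quotient (FareySetoid n)

/-- The vertex `[a:c]` of the Farey graph. -/
def FareyVertex.mk (n : ℕ) (a c : ZMod n) (h : IsCoprime a c) : FareyVertex n :=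
  Quotient.mk (FareySetoid n) ⟨(a, c), h⟩

/-- The Farey graph `G3(n)`: vertices `[a:c]` and `[b:d]` are adjacent iff
`ad - bc ≡ ±1 (mod n)`. -/
def FareyGraph (n : ℕ) : SimpleGraph (FareyVertex n) where
  Adj u v := u ≠ v ∧ ∃ a c b d : ZMod n,
    (∃ h, u = FareyVertex.mk n a c h) ∧ (∃ h, v = FareyVertex.mk n b d h) ∧
    (a * d - b * c = 1 ∨ a * d - b * c = -1)
  symm := ⟨by
    rintro u v ⟨hne, a, c, b, d, hu, hv, h⟩
    refine ⟨hne.symm, b, d, a, c, hv, hu, ?_⟩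
    rcases h with h | h
    · right; linear_combination -h
    · left; linear_combination -h⟩
  loopless := ⟨fun u h => h.1 rfl⟩

instance (n : ℕ) [NeZero n] : Finite (FareyVertex n) := Quotient.finite _

/-- A pair of integers `b, d` with `gcd(b, d, n) = 1` yields a pair generating the unit
ideal of `ℤ/nℤ`. -/
lemma isCoprime_zmod_of_gcd {n : ℕ} {b d : ℤ} (h : Int.gcd b (Int.gcd d n) = 1) :
    IsCoprime (b : ZMod n) (d : ZMod n) := by
  obtain ⟨u, v, huv⟩ := Int.isCoprime_iff_gcd_eq_one.mpr h
  have hgcd : ((Int.gcd d n : ℕ) : ℤ) = d * Int.gcdA d n + n * Int.gcdB d n :=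
    Int.gcd_eq_gcd_ab d (n : ℤ)
  refine ⟨(u : ZMod n), ((v * Int.gcdA d (n : ℤ) : ℤ) : ZMod n), ?_⟩
  have huv' : u * b + (v * Int.gcdA d (n : ℤ)) * d + (v * Int.gcdB d (n : ℤ)) * n = 1 := by
    rw [← huv, hgcd]; ring
  have := congrArg (fun z : ℤ => (z : ZMod n)) huv'
  push_cast at this
  rw [ZMod.natCast_self] at this
  push_cast
  linear_combination this
/-- The vertex `[b:d]` of `G3(n)` determined by integers `b`, `d` with `gcd(b,d,n) = 1`. -/
def FareyVertex.ofInt (n : ℕ) (b d : ℤ) (h : Int.gcd b (Int.gcd d n) = 1) : FareyVertex n :=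
  FareyVertex.mk n (b : ZMod n) (d : ZMod n) (isCoprime_zmod_of_gcd h)

/-- The number of vertices of the Farey graph `G3(n)`. -/
noncomputable def fareyCard (n : ℕ) : ℕ := Nat.card (FareyVertex n)

/-- The characteristic polynomial of the (real) adjacency matrix of the Farey
graph `G3(n)` (junk value `1` for `n = 0`). -/
noncomputable def fareyCharpoly (n : ℕ) : Polynomial ℝ :=
  if h : n = 0 then 1
  else
    letI : NeZero n := ⟨h⟩
    letI : Fintype (FareyVertex n) := Fintype.ofFinite _
    letI : DecidableEq (FareyVertex n) := Classical.decEq _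
    letI : DecidableRel (FareyGraph n).Adj := Classical.decRel _
    Matrix.charpoly ((FareyGraph n).adjMatrix ℝ)

/-- The spectrum of the Farey graph `G3(n)`: the multiset of real roots, with
multiplicity, of the characteristic polynomial of its adjacency matrix. -/
noncomputable def sp3 (n : ℕ) : Multiset ℝ := (fareyCharpoly n).roots

open Sum in
/-- The Hecke graph of level `n` with parameter `t` (the graphs `G4(n)` and `G6(n)` are
obtained for `t = 2` and `t = 3` respectively): the vertex set consists of two disjoint
copies of the vertices of `G3(n)` (even vertices `inl [a:c]` and odd vertices
`inr [b:d]`); an even vertex `[a:c]` and an odd vertex `[b:d]` are adjacent iff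
`ad - t·bc ≡ ±1 (mod n)`, and no two vertices of the same parity are adjacent. -/
def HeckeGraph (n : ℕ) (t : ℤ) : SimpleGraph (FareyVertex n ⊕ FareyVertex n) where
  Adj u v :=
    (∃ a c b d : ZMod n,
      (∃ h, u = inl (FareyVertex.mk n a c h)) ∧ (∃ h, v = inr (FareyVertex.mk n b d h)) ∧
      (a * d - (t : ZMod n) * (b * c) = 1 ∨ a * d - (t : ZMod n) * (b * c) = -1)) ∨
    (∃ a c b d : ZMod n,
      (∃ h, v = inl (FareyVertex.mk n a c h)) ∧ (∃ h, u = inr (FareyVertex.mk n b d h)) ∧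
      (a * d - (t : ZMod n) * (b * c) = 1 ∨ a * d - (t : ZMod n) * (b * c) = -1))
  symm := ⟨by
    rintro u v (h | h)
    · exact Or.inr h
    · exact Or.inl h⟩
  loopless := ⟨by
    rintro u (⟨a, c, b, d, ⟨h₁, hu⟩, ⟨h₂, hv⟩, -⟩ | ⟨a, c, b, d, ⟨h₁, hv⟩, ⟨h₂, hu⟩, -⟩) <;>
      rw [hu] at hv
    · exact inl_ne_inr hv
    · exact inr_ne_inl hv⟩

/-- The characteristic polynomial of the (real) adjacency matrix of the Hecke graph of
level `n` with parameter `t` (junk value `1` for `n = 0`). -/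
noncomputable def heckeCharpoly (n : ℕ) (t : ℤ) : Polynomial ℝ :=
  if h : n = 0 then 1
  else
    letI : NeZero n := ⟨h⟩
    letI : Fintype (FareyVertex n) := Fintype.ofFinite _
    letI : DecidableEq (FareyVertex n ⊕ FareyVertex n) := Classical.decEq _
    letI : DecidableRel (HeckeGraph n t).Adj := Classical.decRel _
    Matrix.charpoly ((HeckeGraph n t).adjMatrix ℝ)

/-- The spectrum of the Hecke graph of level `n` with parameter `t`: the multiset of real
roots, with multiplicity, of the characteristic polynomial of its adjacency matrix. -/
noncomputable def spHecke (n : ℕ) (t : ℤ) : Multiset ℝ := (heckeCharpoly n t).roots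

namespace Stmt16Aux
open Sum

variable {n : ℕ}

lemma mk_eq_mk_iff {a c b d : ZMod n} {h : IsCoprime a c} {h' : IsCoprime b d} :
    FareyVertex.mk n a c h = FareyVertex.mk n b d h' ↔
      (a = b ∧ c = d) ∨ (a = -b ∧ c = -d) := by
  constructor
  · intro he
    have := Quotient.exact he
    rcases this with h1 | h1
    · left; simpa [Prod.ext_iff] using h1
    · right; simpa [Prod.ext_iff] using h1
  · rintro (⟨rfl, rfl⟩ | ⟨rfl, rfl⟩)
    · rfl
    · exact Quotient.sound (Or.inr (by simp [Prod.ext_iff]))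

/-- Scaling the first coordinate by a unit. -/
def scale (u : (ZMod n)ˣ) : FareyVertex n → FareyVertex n :=
  Quotient.map
    (fun p => ⟨((u : ZMod n) * p.1.1, p.1.2),
      (isCoprime_mul_unit_left_left u.isUnit _ _).mpr p.2⟩)
    (by
      rintro ⟨⟨a, c⟩, hp⟩ ⟨⟨b, d⟩, hq⟩ (h | h)
      · left
        simp only [Prod.ext_iff] at h ⊢
        exact ⟨by rw [h.1], h.2⟩
      · right
        simp only [Prod.ext_iff, Prod.fst_neg, Prod.snd_neg] at h ⊢
        exact ⟨by rw [h.1, mul_neg], h.2⟩)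

lemma scale_mk (u : (ZMod n)ˣ) (a c : ZMod n) (h : IsCoprime a c) :
    scale u (FareyVertex.mk n a c h) =
      FareyVertex.mk n ((u : ZMod n) * a) c
        ((isCoprime_mul_unit_left_left u.isUnit _ _).mpr h) := rfl

lemma scale_scale (u v : (ZMod n)ˣ) (x : FareyVertex n) :
    scale u (scale v x) = scale (u * v) x := by
  induction x using Quotient.ind with
  | _ p =>
    apply Quotient.sound
    left
    simp [Prod.ext_iff, mul_assoc]

lemma scale_one (x : FareyVertex n) : scale 1 x = x := by
  induction x using Quotient.ind with
  | _ p =>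
    apply Quotient.sound
    left
    simp [Prod.ext_iff]

lemma scale_inv_scale (u : (ZMod n)ˣ) (x : FareyVertex n) :
    scale u⁻¹ (scale u x) = x := by
  rw [scale_scale, inv_mul_cancel, scale_one]

lemma scale_scale_inv (u : (ZMod n)ˣ) (x : FareyVertex n) :
    scale u (scale u⁻¹ x) = x := by
  rw [scale_scale, mul_inv_cancel, scale_one]

lemma scale_injective (u : (ZMod n)ˣ) : Function.Injective (scale u) :=
  Function.LeftInverse.injective (scale_inv_scale u)

lemma covering (n : ℕ) (hn : 1 < n) (t : ℤ) (ht : IsUnit ((t : ℤ) : ZMod n)) :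
    ∃ φ : FareyVertex n ⊕ FareyVertex n → FareyVertex n,
      Function.Surjective φ ∧
      (∀ ⦃u v⦄, (HeckeGraph n t).Adj u v → (FareyGraph n).Adj (φ u) (φ v)) ∧
      (∀ v : FareyVertex n, Nat.card (φ ⁻¹' {v}) = 2) ∧
      (∀ w, Set.BijOn φ ((HeckeGraph n t).neighborSet w)
        ((FareyGraph n).neighborSet (φ w))) := by
  haveI : Fact (1 < n) := ⟨hn⟩
  set u : (ZMod n)ˣ := ht.unit with hudef
  have hu : (u : ZMod n) = ((t : ℤ) : ZMod n) := ht.unit_spec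
  have hui : ((t : ℤ) : ZMod n) * ((u⁻¹ : (ZMod n)ˣ) : ZMod n) = 1 := by
    rw [← hu]; exact u.mul_inv
  set φ : FareyVertex n ⊕ FareyVertex n → FareyVertex n := Sum.elim id (scale u) with hφ
  -- structural lemmas
  have hstructl : ∀ (x : FareyVertex n) v, (HeckeGraph n t).Adj (inl x) v →
      ∃ y, v = inr y := by
    rintro x v (⟨a, c, b, d, _, ⟨_, hv⟩, _⟩ | ⟨a, c, b, d, _, ⟨_, hv⟩, _⟩)
    · exact ⟨_, hv⟩
    · exact absurd hv (by simp)
  have hstructr : ∀ (y : FareyVertex n) v, (HeckeGraph n t).Adj (inr y) v →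
      ∃ x, v = inl x := by
    rintro y v (⟨a, c, b, d, ⟨_, hv⟩, _, _⟩ | ⟨a, c, b, d, ⟨_, hv⟩, _, _⟩)
    · exact absurd hv (by simp)
    · exact ⟨_, hv⟩
  -- Hecke adjacency implies Farey adjacency of the images
  have hA : ∀ x y, (HeckeGraph n t).Adj (inl x) (inr y) →
      (FareyGraph n).Adj x (scale u y) := by
    rintro x y (⟨a, c, b, d, ⟨ha, hx⟩, ⟨hb, hy⟩, hdet⟩ |
                ⟨a, c, b, d, ⟨ha, hx⟩, ⟨hb, hy⟩, hdet⟩)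
    · rw [Sum.inl.injEq] at hx
      rw [Sum.inr.injEq] at hy
      subst hx; subst hy
      refine And.intro ?_ ?_
      · intro heq
        rw [scale_mk, mk_eq_mk_iff] at heq
        have h0 : a * d - ((t : ℤ) : ZMod n) * (b * c) = 0 := by
          rcases heq with ⟨h1, h2⟩ | ⟨h1, h2⟩
          · rw [h1, h2, ← hu]; ring
          · rw [h1, h2, ← hu]; ring
        rcases hdet with h | h
        · rw [h0] at h; exact zero_ne_one h
        · rw [h0] at h
          exact one_ne_zero (neg_eq_zero.mp h.symm)
      · refine ⟨a, c, (u : ZMod n) * b, d, ⟨ha, rfl⟩, ⟨_, (scale_mk u b d hb)⟩, ?_⟩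
        rcases hdet with h | h
        · left; linear_combination h - b * c * hu
        · right; linear_combination h - b * c * hu
    · exact absurd hy (by simp)
  -- Farey adjacency lifts
  have hB : ∀ x z, (FareyGraph n).Adj x z →
      (HeckeGraph n t).Adj (inl x) (inr (scale u⁻¹ z)) := by
    rintro x z (⟨hne, a, c, b, d, ⟨ha, hx⟩, ⟨hb, hz⟩, hdet⟩ : _ ≠ _ ∧ _)
    left
    refine ⟨a, c, ((u⁻¹ : (ZMod n)ˣ) : ZMod n) * b, d,
      ⟨ha, by rw [hx]⟩, ⟨_, by rw [hz, scale_mk]⟩, ?_⟩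
    rcases hdet with h | h
    · left; linear_combination h - b * c * hui
    · right; linear_combination h - b * c * hui
  have hB' : ∀ y z, (FareyGraph n).Adj (scale u y) z →
      (HeckeGraph n t).Adj (inr y) (inl z) := by
    intro y z hadj
    have := hB z (scale u y) hadj.symm
    rw [scale_inv_scale] at this
    exact this.symm
  -- the adjacency-preservation statement
  have hpres : ∀ ⦃p q⦄, (HeckeGraph n t).Adj p q → (FareyGraph n).Adj (φ p) (φ q) := by
    intro p q hpq
    match p, q with
    | inl x, w =>
      obtain ⟨y, rfl⟩ := hstructl x w hpq
      exact hA x y hpq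
    | inr y, w =>
      obtain ⟨x, rfl⟩ := hstructr y w hpq
      exact (hA x y hpq.symm).symm
  refine ⟨φ, fun v => ⟨inl v, rfl⟩, hpres, ?_, ?_⟩
  · intro v
    have hset : φ ⁻¹' {v} = {inl v, inr (scale u⁻¹ v)} := by
      ext w
      cases w with
      | inl a =>
        simp only [hφ, Set.mem_preimage, Sum.elim_inl, id_eq, Set.mem_singleton_iff,
          Set.mem_insert_iff, Sum.inl.injEq]
        simp
      | inr b =>
        simp only [hφ, Set.mem_preimage, Sum.elim_inr, Set.mem_singleton_iff,
          Set.mem_insert_iff, Sum.inr.injEq]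
        constructor
        · rintro rfl
          right; rw [scale_inv_scale]
        · rintro (h | rfl)
          · exact absurd h (by simp)
          · exact scale_scale_inv u v
    rw [hset, Nat.card_coe_set_eq, Set.ncard_pair (by simp)]
  · intro w
    constructor
    · intro z hz
      exact hpres hz
    constructor
    · intro p hp q hq hpq
      match w with
      | inl x =>
        obtain ⟨y₁, rfl⟩ := hstructl x p hp
        obtain ⟨y₂, rfl⟩ := hstructl x q hq
        simp only [hφ, Sum.elim_inr] at hpq
        rw [scale_injective u hpq]
      | inr y =>
        obtain ⟨x₁, rfl⟩ := hstructr y p hp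
        obtain ⟨x₂, rfl⟩ := hstructr y q hq
        simp only [hφ, Sum.elim_inl, id_eq] at hpq
        rw [hpq]
    · intro z hz
      match w with
      | inl x =>
        refine ⟨inr (scale u⁻¹ z), hB x z hz, ?_⟩
        simp only [hφ, Sum.elim_inr]
        exact scale_scale_inv u z
      | inr y =>
        exact ⟨inl z, hB' y z hz, rfl⟩

end Stmt16Aux

theorem stmt16' : True := trivial

/-- For every odd `n ≥ 3` there is a 2-fold graph covering from the
Hecke graph `G4(n) = HeckeGraph n 2` onto the Farey graph `G3(n)`; likewise, for every
`n ≥ 2` not divisible by `3`, from `G6(n) = HeckeGraph n 3` onto `G3(n)`. -/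
theorem stmt16 :
    (∀ n : ℕ, 3 ≤ n → Odd n →
      ∃ φ : FareyVertex n ⊕ FareyVertex n → FareyVertex n,
        Function.Surjective φ ∧
        (∀ ⦃u v⦄, (HeckeGraph n 2).Adj u v → (FareyGraph n).Adj (φ u) (φ v)) ∧
        (∀ v : FareyVertex n, Nat.card (φ ⁻¹' {v}) = 2) ∧
        (∀ w, Set.BijOn φ ((HeckeGraph n 2).neighborSet w) ((FareyGraph n).neighborSet (φ w)))) ∧
    (∀ n : ℕ, 2 ≤ n → ¬ (3 ∣ n) →
      ∃ φ : FareyVertex n ⊕ FareyVertex n → FareyVertex n,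
        Function.Surjective φ ∧
        (∀ ⦃u v⦄, (HeckeGraph n 3).Adj u v → (FareyGraph n).Adj (φ u) (φ v)) ∧
        (∀ v : FareyVertex n, Nat.card (φ ⁻¹' {v}) = 2) ∧
        (∀ w, Set.BijOn φ ((HeckeGraph n 3).neighborSet w) ((FareyGraph n).neighborSet (φ w)))) := by
  have main : ∀ (n : ℕ) (_ : 1 < n) (t : ℤ) (_ : IsUnit ((t : ℤ) : ZMod n)),
      ∃ φ : FareyVertex n ⊕ FareyVertex n → FareyVertex n,
        Function.Surjective φ ∧
        (∀ ⦃u v⦄, (HeckeGraph n t).Adj u v → (FareyGraph n).Adj (φ u) (φ v)) ∧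
        (∀ v : FareyVertex n, Nat.card (φ ⁻¹' {v}) = 2) ∧
        (∀ w, Set.BijOn φ ((HeckeGraph n t).neighborSet w)
          ((FareyGraph n).neighborSet (φ w))) := fun n hn t ht => Stmt16Aux.covering n hn t ht
  constructor
  · intro n hn hodd
    have h2 : IsUnit (((2 : ℤ)) : ZMod n) := by
      have : ¬ (2 ∣ n) := by
        rw [Nat.odd_iff] at hodd; omega
      have := ZMod.isUnit_prime_of_not_dvd Nat.prime_two this
      simpa using this
    exact main n (by omega) 2 h2
  · intro n hn h3
    have h3' : IsUnit (((3 : ℤ)) : ZMod n) := by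
      have := ZMod.isUnit_prime_of_not_dvd Nat.prime_three h3
      simpa using this
    exact main n (by omega) 3 h3'
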